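/- If n ≡ 0 (mod 3), then removing the single horizontal edge x_{(n−1)1}x_{n1} from G_{n,2} increases the total domination number: γ_t(G_{n,2} − x_{(n−1)1}x_{n1}) ≥ γ_t(G_{n,2}) + 1. Consequently b_t(G_{n,2}) = 1 for n ≡ 0 (mod 3). -/

import Mathlib

open SimpleGraph Finset

/-- The grid graph `G_{n,m}`, the Cartesian (box) product of paths `P_n` and `P_m`. -/
def gridGraph (n m : ℕ) : SimpleGraph (Fin n × Fin m) :=
  (pathGraph n) □ (pathGraph m)

/-- `D` is a total dominating set of `G`: every vertex has a neighbor in `D`. -/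
def IsTotalDomSet {V : Type*} (G : SimpleGraph V) (D : Set V) : Prop :=
  ∀ v : V, ∃ u ∈ D, G.Adj v u

/-- The total domination number of `G`. -/
noncomputable def totalDomNum {V : Type*} [Fintype V] (G : SimpleGraph V) : ℕ :=
  sInf {k | ∃ D : Finset V, IsTotalDomSet G ↑D ∧ D.card = k}

/-- The total bondage number: the least number of edges whose removal increases
the total domination number. -/
noncomputable def totalBondage {V : Type*} [Fintype V] (G : SimpleGraph V) : ℕ :=
  sInf {k | ∃ F : Finset (Sym2 V), ↑F ⊆ G.edgeSet ∧ F.card = k ∧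
    totalDomNum (G.deleteEdges ↑F) > totalDomNum G}

lemma grid_adj {n : ℕ} (a b : Fin n × Fin 2) :
    (gridGraph n 2).Adj a b ↔
      ((a.1.val + 1 = b.1.val ∨ b.1.val + 1 = a.1.val) ∧ a.2 = b.2) ∨
      ((a.2.val + 1 = b.2.val ∨ b.2.val + 1 = a.2.val) ∧ a.1 = b.1) := by
  simp [gridGraph, boxProd_adj, pathGraph_adj]

lemma upper_bound {n : ℕ} (hn : 2 ≤ n) (h : n % 3 = 0) :
    totalDomNum (gridGraph n 2) ≤ 2 * (n / 3) := by
  set D0 : Finset (Fin n × Fin 2) :=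
    (univ.filter fun i : Fin n => i.val % 3 = 1) ×ˢ univ with hD0
  have hmem : ∀ p : Fin n × Fin 2, p ∈ D0 ↔ p.1.val % 3 = 1 := by
    intro p; simp [hD0]
  have hcardI : (univ.filter fun i : Fin n => i.val % 3 = 1).card = n / 3 := by
    apply Finset.card_eq_of_bijective (fun k hk => ⟨3 * k + 1, by omega⟩)
    · intro a ha
      simp only [mem_filter, mem_univ, true_and] at ha
      exact ⟨a.val / 3, by omega, by ext; simp; omega⟩
    · intro k hk; simp only [mem_filter, mem_univ, true_and]; omega
    · intro i j hi hj hij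
      have := congrArg Fin.val hij
      simp only at this; omega
  have hcard : D0.card = 2 * (n / 3) := by
    rw [hD0, Finset.card_product, hcardI]; simp [mul_comm]
  have hdom : IsTotalDomSet (gridGraph n 2) ↑D0 := by
    intro v
    have hm3 : v.1.val % 3 = 0 ∨ v.1.val % 3 = 1 ∨ v.1.val % 3 = 2 := by omega
    rcases hm3 with h0 | h1 | h2
    · refine ⟨(⟨v.1.val + 1, by omega⟩, v.2), ?_, ?_⟩
      · simp only [Finset.mem_coe, hmem]; omega
      · rw [grid_adj]; left; exact ⟨Or.inl rfl, rfl⟩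
    · refine ⟨(v.1, ⟨1 - v.2.val, by omega⟩), ?_, ?_⟩
      · simp only [Finset.mem_coe, hmem]; exact h1
      · rw [grid_adj]; right
        refine ⟨?_, rfl⟩
        show v.2.val + 1 = 1 - v.2.val ∨ (1 - v.2.val) + 1 = v.2.val
        have : v.2.val < 2 := v.2.isLt
        omega
    · have hv1 : 1 ≤ v.1.val := by omega
      refine ⟨(⟨v.1.val - 1, by omega⟩, v.2), ?_, ?_⟩
      · simp only [Finset.mem_coe, hmem]; omega
      · rw [grid_adj]; left; exact ⟨Or.inr (by simp; omega), rfl⟩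
  exact Nat.sInf_le ⟨D0, hdom, hcard⟩

lemma deg_le_three {n : ℕ} (S : Set (Sym2 (Fin n × Fin 2))) (u : Fin n × Fin 2)
    [DecidablePred fun v => ((gridGraph n 2).deleteEdges S).Adj v u] :
    (univ.filter fun v => ((gridGraph n 2).deleteEdges S).Adj v u).card ≤ 3 := by
  classical
  have : (univ.filter fun v => ((gridGraph n 2).deleteEdges S).Adj v u).card ≤
      (univ : Finset (Fin 3)).card := by
    apply Finset.card_le_card_of_injOn
      (fun v => if v.2 = u.2 then (if v.1.val < u.1.val then (0 : Fin 3) else 1) else 2)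
    · intro v _; exact mem_univ _
    · intro v hv w hw hvw
      simp only [coe_filter, Set.mem_setOf_eq, mem_univ, true_and] at hv hw
      have hva := (SimpleGraph.deleteEdges_adj.mp hv).1
      have hwa := (SimpleGraph.deleteEdges_adj.mp hw).1
      rw [grid_adj] at hva hwa
      have hu2 : u.2.val < 2 := u.2.isLt
      have hv2 : v.2.val < 2 := v.2.isLt
      have hw2 : w.2.val < 2 := w.2.isLt
      rw [Prod.ext_iff, Fin.ext_iff, Fin.ext_iff]
      by_cases h1 : v.2 = u.2 <;> by_cases h2 : w.2 = u.2 <;>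
        simp only [h1, h2, if_true, if_false, reduceIte] at hvw <;>
        [skip; exact absurd hvw (by split_ifs <;> decide);
         exact absurd hvw (by split_ifs <;> decide); skip]
      · have e1 := congrArg Fin.val h1
        have e2 := congrArg Fin.val h2
        rcases hva with ⟨hc, _⟩ | ⟨hr, _⟩
        · rcases hwa with ⟨hc', _⟩ | ⟨hr', _⟩
          · split_ifs at hvw with p q <;> omega
          · omega
        · omega
      · have e1 : v.2.val ≠ u.2.val := fun hh => h1 (Fin.ext hh)
        have e2 : w.2.val ≠ u.2.val := fun hh => h2 (Fin.ext hh)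
        rcases hva with ⟨_, hc⟩ | ⟨_, hr⟩
        · exact absurd (congrArg Fin.val hc) e1
        · rcases hwa with ⟨_, hc'⟩ | ⟨_, hr'⟩
          · exact absurd (congrArg Fin.val hc') e2
          · have := congrArg Fin.val hr
            have := congrArg Fin.val hr'
            constructor <;> omega
  simpa using this

lemma deg_le_two {n : ℕ} (S : Set (Sym2 (Fin n × Fin 2))) (u : Fin n × Fin 2)
    (hu : u.1.val = n - 1) (hn : 1 ≤ n)
    [DecidablePred fun v => ((gridGraph n 2).deleteEdges S).Adj v u] :
    (univ.filter fun v => ((gridGraph n 2).deleteEdges S).Adj v u).card ≤ 2 := by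
  classical
  have : (univ.filter fun v => ((gridGraph n 2).deleteEdges S).Adj v u).card ≤
      (univ : Finset (Fin 2)).card := by
    apply Finset.card_le_card_of_injOn
      (fun v => if v.2 = u.2 then (0 : Fin 2) else 1)
    · intro v _; exact mem_univ _
    · intro v hv w hw hvw
      simp only [coe_filter, Set.mem_setOf_eq, mem_univ, true_and] at hv hw
      have hva := (SimpleGraph.deleteEdges_adj.mp hv).1
      have hwa := (SimpleGraph.deleteEdges_adj.mp hw).1
      rw [grid_adj] at hva hwa
      have hu2 : u.2.val < 2 := u.2.isLt
      have hv2 : v.2.val < 2 := v.2.isLt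
      have hw2 : w.2.val < 2 := w.2.isLt
      have hv1 : v.1.val < n := v.1.isLt
      have hw1 : w.1.val < n := w.1.isLt
      rw [Prod.ext_iff, Fin.ext_iff, Fin.ext_iff]
      by_cases h1 : v.2 = u.2 <;> by_cases h2 : w.2 = u.2 <;>
        simp only [h1, h2, if_true, if_false, reduceIte] at hvw <;>
        [skip; exact absurd hvw (by decide); exact absurd hvw (by decide); skip]
      · have e1 := congrArg Fin.val h1
        have e2 := congrArg Fin.val h2
        rcases hva with ⟨hc, _⟩ | ⟨hr, _⟩
        · rcases hwa with ⟨hc', _⟩ | ⟨hr', _⟩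
          · constructor <;> omega
          · omega
        · omega
      · have e1 : v.2.val ≠ u.2.val := fun hh => h1 (Fin.ext hh)
        have e2 : w.2.val ≠ u.2.val := fun hh => h2 (Fin.ext hh)
        rcases hva with ⟨_, hc⟩ | ⟨_, hr⟩
        · exact absurd (congrArg Fin.val hc) e1
        · rcases hwa with ⟨_, hc'⟩ | ⟨_, hr'⟩
          · exact absurd (congrArg Fin.val hc') e2
          · have := congrArg Fin.val hr
            have := congrArg Fin.val hr'
            constructor <;> omega
  simpa using this

lemma lower_bound {n : ℕ} (hn : 1 < n) (h : n % 3 = 0) :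
    2 * (n / 3) + 1 ≤ totalDomNum ((gridGraph n 2).deleteEdges
      ({s(((⟨n - 2, by omega⟩ : Fin n), (0 : Fin 2)),
          ((⟨n - 1, by omega⟩ : Fin n), (0 : Fin 2)))} : Set (Sym2 (Fin n × Fin 2)))) := by
  classical
  set a : Fin n × Fin 2 := (⟨n - 2, by omega⟩, 0) with ha
  set x1 : Fin n × Fin 2 := (⟨n - 1, by omega⟩, 0) with hx1
  set x2 : Fin n × Fin 2 := (⟨n - 1, by omega⟩, 1) with hx2
  set G' := (gridGraph n 2).deleteEdges ({s(a, x1)} : Set (Sym2 (Fin n × Fin 2))) with hG'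
  have ha1 : (a.1 : ℕ) = n - 2 := rfl
  have ha2 : (a.2 : ℕ) = 0 := rfl
  have hx11 : (x1.1 : ℕ) = n - 1 := rfl
  have hx12 : (x1.2 : ℕ) = 0 := rfl
  have hx21 : (x2.1 : ℕ) = n - 1 := rfl
  have hx22 : (x2.2 : ℕ) = 1 := rfl
  have hTot : IsTotalDomSet G' ↑(univ : Finset (Fin n × Fin 2)) := by
    intro v
    refine ⟨(v.1, ⟨1 - v.2.val, by omega⟩), by simp, ?_⟩
    rw [hG', SimpleGraph.deleteEdges_adj]
    have hvlt := v.2.isLt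
    constructor
    · rw [grid_adj]; right
      refine ⟨?_, rfl⟩
      show v.2.val + 1 = 1 - v.2.val ∨ (1 - v.2.val) + 1 = v.2.val
      omega
    · intro hmem
      rw [Set.mem_singleton_iff, Sym2.eq_iff] at hmem
      rcases hmem with ⟨h1, h2⟩ | ⟨h1, h2⟩ <;>
      · have e1 := congrArg (fun p : Fin n × Fin 2 => (p.2 : ℕ)) h1
        have e2 := congrArg (fun p : Fin n × Fin 2 => (p.2 : ℕ)) h2
        simp only [ha2, hx12, Fin.val_zero] at e1 e2
        omega
  have hne : {k | ∃ D : Finset (Fin n × Fin 2), IsTotalDomSet G' ↑D ∧ D.card = k}.Nonempty :=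
    ⟨_, univ, hTot, rfl⟩
  apply le_csInf hne
  rintro k ⟨D, hD, rfl⟩
  have hadj_x1 : ∀ v, G'.Adj x1 v → v = x2 := by
    intro v hv
    rw [hG', SimpleGraph.deleteEdges_adj] at hv
    obtain ⟨hadj, hnm⟩ := hv
    rw [grid_adj] at hadj
    have hv1 : (v.1 : ℕ) < n := v.1.isLt
    have hv2 : (v.2 : ℕ) < 2 := v.2.isLt
    rcases hadj with ⟨hc, h2⟩ | ⟨h2, h1⟩
    · exfalso
      apply hnm
      rw [Set.mem_singleton_iff, Sym2.eq_iff]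
      right
      refine ⟨rfl, ?_⟩
      have : (v.1 : ℕ) = n - 2 := by omega
      have hv20 : (v.2 : ℕ) = 0 := by
        have := congrArg Fin.val h2; omega
      rw [ha]
      exact Prod.ext (Fin.ext this) (Fin.ext hv20)
    · have hv1e := congrArg Fin.val h1
      have hv21 : (v.2 : ℕ) = 1 := by omega
      refine Prod.ext (Fin.ext ?_) (Fin.ext ?_)
      · rw [hx21]; omega
      · rw [hx22]; omega
  have hx2D : x2 ∈ D := by
    obtain ⟨u, hu, hadj⟩ := hD x1
    rw [hadj_x1 u hadj] at hu
    exact Finset.mem_coe.mp hu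
  have cover : (univ : Finset (Fin n × Fin 2)) ⊆
      D.biUnion (fun u => univ.filter fun v => G'.Adj v u) := by
    intro v _
    obtain ⟨u, hu, hadj⟩ := hD v
    exact mem_biUnion.mpr ⟨u, Finset.mem_coe.mp hu, mem_filter.mpr ⟨mem_univ _, hadj⟩⟩
  have hc1 : 1 ≤ D.card := Finset.card_pos.mpr ⟨x2, hx2D⟩
  have hcards : n * 2 ≤ 2 + (D.card - 1) * 3 := by
    calc n * 2 = (univ : Finset (Fin n × Fin 2)).card := by
          simp [Finset.card_univ]
      _ ≤ (D.biUnion (fun u => univ.filter fun v => G'.Adj v u)).card :=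
          Finset.card_le_card cover
      _ ≤ ∑ u ∈ D, (univ.filter fun v => G'.Adj v u).card := Finset.card_biUnion_le
      _ = (univ.filter fun v => G'.Adj v x2).card
            + ∑ u ∈ D.erase x2, (univ.filter fun v => G'.Adj v u).card :=
          (Finset.add_sum_erase D _ hx2D).symm
      _ ≤ 2 + (D.card - 1) * 3 := by
          apply add_le_add
          · exact deg_le_two _ x2 hx21 (by omega)
          · calc ∑ u ∈ D.erase x2, (univ.filter fun v => G'.Adj v u).card
                ≤ (D.erase x2).card * 3 := by
                  refine le_trans (Finset.sum_le_card_nsmul _ _ 3 ?_) (by simp [smul_eq_mul])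
                  intro u _
                  exact deg_le_three _ u
              _ = (D.card - 1) * 3 := by rw [Finset.card_erase_of_mem hx2D]
  omega

theorem total_bondage_grid_two_zero_mod_three (n : ℕ) (hn : 2 ≤ n) (h : n % 3 = 0) :
    totalDomNum ((gridGraph n 2).deleteEdges
        {s(((⟨n - 2, by omega⟩ : Fin n), (0 : Fin 2)), ((⟨n - 1, by omega⟩ : Fin n), (0 : Fin 2)))})
      ≥ totalDomNum (gridGraph n 2) + 1 ∧
    totalBondage (gridGraph n 2) = 1 := by
  have hlow := lower_bound (by omega) h
  have hup := upper_bound hn h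
  have part1 : totalDomNum ((gridGraph n 2).deleteEdges
      {s(((⟨n - 2, by omega⟩ : Fin n), (0 : Fin 2)), ((⟨n - 1, by omega⟩ : Fin n), (0 : Fin 2)))})
      ≥ totalDomNum (gridGraph n 2) + 1 := by
    calc totalDomNum (gridGraph n 2) + 1 ≤ 2 * (n / 3) + 1 := by omega
      _ ≤ _ := hlow
  refine ⟨part1, ?_⟩
  have h1mem : 1 ∈ {k | ∃ F : Finset (Sym2 (Fin n × Fin 2)),
      ↑F ⊆ (gridGraph n 2).edgeSet ∧ F.card = k ∧
      totalDomNum ((gridGraph n 2).deleteEdges ↑F) > totalDomNum (gridGraph n 2)} := by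
    refine ⟨{s(((⟨n - 2, by omega⟩ : Fin n), (0 : Fin 2)),
        ((⟨n - 1, by omega⟩ : Fin n), (0 : Fin 2)))}, ?_, rfl, ?_⟩
    · intro e he
      simp only [Finset.coe_singleton, Set.mem_singleton_iff] at he
      subst he
      rw [SimpleGraph.mem_edgeSet, grid_adj]
      left
      refine ⟨Or.inl ?_, rfl⟩
      show (n - 2) + 1 = n - 1
      omega
    · rw [Finset.coe_singleton]
      exact lt_of_lt_of_le (by omega) part1
  unfold totalBondage
  refine le_antisymm (Nat.sInf_le h1mem) ?_
  rw [Nat.one_le_iff_ne_zero]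
  intro h0
  rcases Nat.sInf_eq_zero.mp h0 with h0' | h0'
  · obtain ⟨F, hFsub, hF0, hFgt⟩ := h0'
    rw [Finset.card_eq_zero] at hF0
    subst hF0
    simp only [Finset.coe_empty, SimpleGraph.deleteEdges_empty] at hFgt
    exact lt_irrefl _ hFgt
  · rw [h0'] at h1mem
    exact h1mem
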